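/- Let L = u·F ⊕ v·F be a 2-dimensional subspace of V (dim V = 4, n = 2ℓ = 4), and suppose the restriction of h to L is degenerate (i.e., the Gram determinant h(u,u)h(v,v) − h(u,v)h(v,u) = 0 after orthogonalization, equivalently L ∩ L^⊥ ≠ 0). Then the K-line (u∧v)·K ⊆ Λ²V is totally isotropic for g: g((u∧v)a, (u∧v)b) = 0 for all a,b ∈ K. -/

import Mathlib

open ExteriorAlgebra

/-- The wedge product of a family of vectors in the exterior algebra. -/
noncomputable def wedgeFam (F : Type*) {V : Type*} [Field F] [AddCommGroup V] [Module F V]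
    {k : ℕ} (u : Fin k → V) : ExteriorAlgebra F V :=
  (List.ofFn fun i => ExteriorAlgebra.ι F (u i)).prod

/-- The element `x₀ + j·x₁` of the algebra `K = K₂`. -/
def Kmk {F : Type*} [Field F] (σ : F → F) (δ x0 x1 : F) : Matrix (Fin 2) (Fin 2) F :=
  !![x0, δ * σ x1; x1, σ x0]

section Aux
variable {F V : Type*} [Field F] [AddCommGroup V] [Module F V]

theorem ι_swap (x y : V) : ι F x * ι F y = -(ι F y * ι F x) :=
  eq_neg_of_add_eq_zero_left (ExteriorAlgebra.ι_add_mul_swap x y)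

theorem wedgeFam_pair (a b : V) : wedgeFam F ![a, b] = ι F a * ι F b := by
  simp [wedgeFam, List.ofFn_succ]

theorem mem_ext_two_iff {x : ExteriorAlgebra F V} :
    x ∈ ⋀[F]^2 V ↔ x ∈ LinearMap.range (ι F : V →ₗ[F] ExteriorAlgebra F V) *
      LinearMap.range (ι F : V →ₗ[F] ExteriorAlgebra F V) := by
  rw [show (⋀[F]^2 V) = LinearMap.range (ι F : V →ₗ[F] ExteriorAlgebra F V) ^ 2 from rfl,
    pow_two]

theorem wedge2_comm (a c b d : V) :
    (ι F a * ι F c) * (ι F b * ι F d) = (ι F b * ι F d) * (ι F a * ι F c) := by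
  calc ι F a * ι F c * (ι F b * ι F d)
      = ι F a * (ι F c * ι F b) * ι F d := by simp only [mul_assoc]
    _ = ι F a * (-(ι F b * ι F c)) * ι F d := by rw [ι_swap c b]
    _ = -((ι F a * ι F b) * (ι F c * ι F d)) := by simp only [mul_neg, neg_mul, mul_assoc]
    _ = -((-(ι F b * ι F a)) * (ι F c * ι F d)) := by rw [ι_swap a b]
    _ = ι F b * ι F a * (ι F c * ι F d) := by simp only [neg_mul, neg_neg]
    _ = ι F b * ι F a * (-(ι F d * ι F c)) := by rw [ι_swap c d]
    _ = -(ι F b * (ι F a * ι F d) * ι F c) := by simp only [mul_neg, mul_assoc]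
    _ = -(ι F b * (-(ι F d * ι F a)) * ι F c) := by rw [ι_swap a d]
    _ = ι F b * ι F d * (ι F a * ι F c) := by simp only [mul_neg, neg_neg, mul_assoc, neg_mul]

theorem ext2_comm {x y : ExteriorAlgebra F V} (hx : x ∈ ⋀[F]^2 V) (hy : y ∈ ⋀[F]^2 V) :
    x * y = y * x := by
  revert y
  have := Submodule.mul_induction_on (mem_ext_two_iff.mp hx)
    (C := fun x => ∀ y, y ∈ ⋀[F]^2 V → x * y = y * x) ?_ ?_
  · exact fun y hy => this y hy
  · rintro _ ⟨a, rfl⟩ _ ⟨c, rfl⟩ y hy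
    refine Submodule.mul_induction_on (mem_ext_two_iff.mp hy) ?_ ?_
    · rintro _ ⟨p, rfl⟩ _ ⟨q, rfl⟩
      exact wedge2_comm a c p q
    · intro y1 y2 h1 h2
      rw [mul_add, add_mul, h1, h2]
  · intro x1 x2 h1 h2 y hy
    rw [add_mul, mul_add, h1 y hy, h2 y hy]

end Aux

theorem ext2_herm {F V : Type*} [Field F] [AddCommGroup V] [Module F V]
    (σ : F ≃+* F) (h : V → V → F)
    (h_herm : ∀ u w, h w u = σ (h u w))
    (H : ExteriorAlgebra F V → ExteriorAlgebra F V → F)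
    (H_add_left : ∀ x x' y, H (x + x') y = H x y + H x' y)
    (H_add_right : ∀ x y y', H x (y + y') = H x y + H x y')
    (H_det : ∀ (k : ℕ) (u w : Fin k → V),
      H (wedgeFam F u) (wedgeFam F w) = Matrix.det (Matrix.of fun i j => h (u i) (w j)))
    {x : ExteriorAlgebra F V} (hx : x ∈ ⋀[F]^2 V) :
    ∀ y ∈ ⋀[F]^2 V, H y x = σ (H x y) := by
  refine Submodule.mul_induction_on (mem_ext_two_iff.mp hx)
    (C := fun x => ∀ y ∈ ⋀[F]^2 V, H y x = σ (H x y)) ?_ ?_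
  · rintro _ ⟨a, rfl⟩ _ ⟨c, rfl⟩ y hy
    refine Submodule.mul_induction_on (mem_ext_two_iff.mp hy) ?_ ?_
    · rintro _ ⟨p, rfl⟩ _ ⟨q, rfl⟩
      rw [← wedgeFam_pair a c, ← wedgeFam_pair p q, H_det, H_det,
        Matrix.det_fin_two, Matrix.det_fin_two]
      simp only [Matrix.of_apply, Matrix.cons_val_zero, Matrix.cons_val_one, Matrix.head_cons]
      rw [map_sub, map_mul, map_mul, ← h_herm a p, ← h_herm a q, ← h_herm c p, ← h_herm c q]
      ring
    · intro y1 y2 h1 h2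
      rw [H_add_left, H_add_right, map_add, h1, h2]
  · intro x1 x2 h1 h2 y hy
    rw [H_add_right, H_add_left, map_add, h1 y hy, h2 y hy]

/-- if `L = uF ⊕ vF` is a 2-dimensional subspace of `V` (`dim V = 4`)
on which `h` restricts degenerately (`L ∩ L^⊥ ≠ 0`), then the `K`-line
`(u∧v)·K ⊆ Λ²V` is totally isotropic for `g`: `g((u∧v)a, (u∧v)b) = 0` for all
`a, b ∈ K`.  The right action of `a = a₀ + j a₁ ∈ K` is `w·a = a₀ • w + a₁ • J w`,
and `g(X,Y) = Λ²h(X,Y) + j·Pf(X,Y)`. -/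
theorem degenerate_line_gives_isotropic_K_line
    {F V : Type*} [Field F] [AddCommGroup V] [Module F V] [FiniteDimensional F V]
    (n ℓ : ℕ) (hn : n = 4) (hℓ : ℓ = 2)
    (hfr : Module.finrank F V = n)
    (σ : F ≃+* F) (hσ : ∀ a, σ (σ a) = a)
    (h : V → V → F)
    (h_add_left : ∀ u u' w, h (u + u') w = h u w + h u' w)
    (h_add_right : ∀ u w w', h u (w + w') = h u w + h u w')
    (h_smul_left : ∀ (s : F) u w, h (s • u) w = σ s * h u w)
    (h_smul_right : ∀ (s : F) u w, h u (s • w) = s * h u w)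
    (h_herm : ∀ u w, h w u = σ (h u w))
    (h_nondeg : ∀ u, (∀ w, h u w = 0) → u = 0)
    (v : Module.Basis (Fin n) F V)
    (h_orth : ∀ i j, i ≠ j → h (v i) (v j) = 0)
    (H : ExteriorAlgebra F V → ExteriorAlgebra F V → F)
    (H_add_left : ∀ x x' y, H (x + x') y = H x y + H x' y)
    (H_add_right : ∀ x y y', H x (y + y') = H x y + H x y')
    (H_smul_left : ∀ (s : F) x y, H (s • x) y = σ s * H x y)
    (H_smul_right : ∀ (s : F) x y, H x (s • y) = s * H x y)
    (H_det : ∀ (k : ℕ) (u w : Fin k → V),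
      H (wedgeFam F u) (wedgeFam F w) = Matrix.det (Matrix.of fun i j => h (u i) (w j)))
    (H_cross : ∀ (k m : ℕ), k ≠ m → ∀ x ∈ ⋀[F]^k V, ∀ y ∈ ⋀[F]^m V, H x y = 0)
    (b : ExteriorAlgebra F V →ₗ[F] F)
    (hb_inj : ∀ z ∈ ⋀[F]^n V, b z = 0 → z = 0)
    (hb_off : ∀ (k : ℕ), k ≠ n → ∀ z ∈ ⋀[F]^k V, b z = 0)
    (J : ExteriorAlgebra F V → ExteriorAlgebra F V)
    (hJ_mem : ∀ x ∈ ⋀[F]^ℓ V, J x ∈ ⋀[F]^ℓ V)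
    (hJ_char : ∀ x ∈ ⋀[F]^ℓ V, ∀ y ∈ ⋀[F]^ℓ V, b (J x * y) = H x y)
    (δ : F) (hδR : σ δ = δ) (hδ0 : δ ≠ 0)
    (hJsq : ∀ x ∈ ⋀[F]^ℓ V, J (J x) = δ • x)
    -- L = uF ⊕ vF is 2-dimensional
    (u w : V) (hLindep : LinearIndependent F ![u, w])
    -- the restriction of h to L is degenerate: L ∩ L^⊥ ≠ 0
    (hLdeg : ∃ z : V, z ≠ 0 ∧ z ∈ Submodule.span F {u, w} ∧
        ∀ x ∈ Submodule.span F {u, w}, h z x = 0) :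
    ∀ a0 a1 b0 b1 : F,
      Kmk ⇑σ δ
          (H (a0 • (ι F u * ι F w) + a1 • J (ι F u * ι F w))
             (b0 • (ι F u * ι F w) + b1 • J (ι F u * ι F w)))
          (b ((a0 • (ι F u * ι F w) + a1 • J (ι F u * ι F w))
             * (b0 • (ι F u * ι F w) + b1 • J (ι F u * ι F w))))
        = 0 := by
  subst hn; subst hℓ
  intro a0 a1 b0 b1
  set W2 := ι F u * ι F w with hW2def
  have hw2mem : W2 ∈ ⋀[F]^2 V := mem_ext_two_iff.mpr
    (Submodule.mul_mem_mul (LinearMap.mem_range_self _ u) (LinearMap.mem_range_self _ w))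
  have hJmem : J W2 ∈ ⋀[F]^2 V := hJ_mem _ hw2mem
  have hsq : W2 * W2 = 0 := by
    rw [hW2def]
    calc ι F u * ι F w * (ι F u * ι F w)
        = ι F u * (ι F w * ι F u) * ι F w := by simp only [mul_assoc]
      _ = ι F u * (-(ι F u * ι F w)) * ι F w := by rw [ι_swap w u]
      _ = -(ι F u * ι F u * (ι F w * ι F w)) := by simp only [mul_neg, neg_mul, mul_assoc]
      _ = 0 := by rw [ι_sq_zero]; simp
  have hA : H W2 W2 = 0 := by
    obtain ⟨z, hz0, hzmem, hzperp⟩ := hLdeg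
    obtain ⟨α, β, hz⟩ := Submodule.mem_span_pair.mp hzmem
    have hu : h z u = 0 := hzperp u (Submodule.subset_span (by simp))
    have hw' : h z w = 0 := hzperp w (Submodule.subset_span (by simp))
    rw [← hz] at hu hw' hz0
    rw [h_add_left, h_smul_left, h_smul_left] at hu hw'
    rw [hW2def, ← wedgeFam_pair u w, H_det, Matrix.det_fin_two]
    simp only [Matrix.of_apply, Matrix.cons_val_zero, Matrix.cons_val_one, Matrix.head_cons]
    have hne : α ≠ 0 ∨ β ≠ 0 := by
      by_contra hc
      push_neg at hc
      exact hz0 (by rw [hc.1, hc.2]; simp)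
    rcases hne with hα | hβ
    · have hσα : σ α ≠ 0 := fun hc => hα (σ.injective (by rw [hc, map_zero]))
      have key : σ α * (h u u * h w w - h u w * h w u) = 0 := by
        linear_combination h w w * hu - h w u * hw'
      exact (mul_eq_zero.mp key).resolve_left hσα
    · have hσβ : σ β ≠ 0 := fun hc => hβ (σ.injective (by rw [hc, map_zero]))
      have key : σ β * (h u u * h w w - h u w * h w u) = 0 := by
        linear_combination h u u * hw' - h u w * hu
      exact (mul_eq_zero.mp key).resolve_left hσβ
  have hPb : b (W2 * W2) = 0 := by rw [hsq, map_zero]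
  have hRz : b (J W2 * W2) = 0 := by rw [hJ_char _ hw2mem _ hw2mem, hA]
  have hC : H (J W2) W2 = 0 := by
    rw [← hJ_char _ hJmem _ hw2mem, hJsq _ hw2mem, smul_mul_assoc, hsq, smul_zero, map_zero]
  have hB : H W2 (J W2) = 0 := by
    rw [ext2_herm σ h h_herm H H_add_left H_add_right H_det hJmem _ hw2mem, hC, map_zero]
  have hQ : b (W2 * J W2) = 0 := by rw [ext2_comm hw2mem hJmem, hRz]
  have hS : b (J W2 * J W2) = 0 := by rw [hJ_char _ hw2mem _ hJmem, hB]
  have hD : H (J W2) (J W2) = 0 := by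
    rw [← hJ_char _ hJmem _ hJmem, hJsq _ hw2mem, smul_mul_assoc, map_smul, hQ, smul_zero]
  have hHfull : H (a0 • W2 + a1 • J W2) (b0 • W2 + b1 • J W2) = 0 := by
    simp only [H_add_left, H_add_right, H_smul_left, H_smul_right, hA, hB, hC, hD,
      mul_zero, add_zero]
  have hbfull : b ((a0 • W2 + a1 • J W2) * (b0 • W2 + b1 • J W2)) = 0 := by
    simp only [add_mul, mul_add, smul_mul_assoc, mul_smul_comm, map_add, map_smul,
      hPb, hQ, hRz, hS, smul_zero, add_zero]
  rw [hHfull, hbfull]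
  unfold Kmk
  ext i j
  fin_cases i <;> fin_cases j <;> simp
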